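/- For every matrix x ∈ M_n(ℂ), v · (x ⊗ₖ 1) · vᴴ = Σ_{k∈Fin n} (w^k · x · (w^k)ᴴ) ⊗ₖ f_k; in particular, for every j ∈ Fin n, v · (e_j ⊗ₖ 1) · vᴴ = Σ_{k∈Fin n} e_{j−k} ⊗ₖ f_k (subtraction in Fin n). -/

import Mathlib

open Matrix Kronecker

noncomputable section

/-- The primitive `n`-th root of unity `exp(2πi/n)`. -/
def omega (n : ℕ) : ℂ := Complex.exp (2 * Real.pi * Complex.I / n)

/-- The diagonal matrix unit `e_i` with a `1` in entry `(i,i)`. -/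
def eM (n : ℕ) (i : Fin n) : Matrix (Fin n) (Fin n) ℂ := Matrix.single i i 1

/-- The cyclic shift matrix `w`, with `w(a,b) = 1` iff `b = a + 1` (mod `n`). -/
def wM (n : ℕ) [NeZero n] : Matrix (Fin n) (Fin n) ℂ :=
  Matrix.of fun a b => if b = a + 1 then 1 else 0

/-- The spectral projections `f_k = (1/n) Σ_j ω^{-jk} w^j` of `w`. -/
def fM (n : ℕ) [NeZero n] (k : Fin n) : Matrix (Fin n) (Fin n) ℂ :=
  ((n : ℂ))⁻¹ • ∑ j : Fin n, (omega n ^ ((j : ℕ) * (k : ℕ)))⁻¹ • wM n ^ (j : ℕ)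

/-- The normalized trace of a square matrix: the trace divided by the size. -/
def nτ {ι : Type*} [Fintype ι] (A : Matrix ι ι ℂ) : ℂ :=
  Matrix.trace A / (Fintype.card ι)

/-- The `N`-fold elementary tensor `A_0 ⊗ ⋯ ⊗ A_{N-1}` of `n × n` matrices,
realized as a matrix indexed by functions `Fin N → Fin n`. -/
def tens (n N : ℕ) (A : Fin N → Matrix (Fin n) (Fin n) ℂ) :
    Matrix (Fin N → Fin n) (Fin N → Fin n) ℂ :=
  Matrix.of fun x y => ∏ k, A k (x k) (y k)

/-- `u_s = 1^{⊗(s-1)} ⊗ v ⊗ 1^{⊗…}` where `v = Σ_i w^i ⊗ f_i` occupies factors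
`s-1` and `s` of the `N`-fold tensor power. -/
def uM (n N : ℕ) [NeZero n] (s : ℕ) : Matrix (Fin N → Fin n) (Fin N → Fin n) ℂ :=
  ∑ i : Fin n, tens n N fun k =>
    if (k : ℕ) + 1 = s then wM n ^ (i : ℕ)
    else if (k : ℕ) = s then fM n i
    else 1

/-- `U_m = u_1 u_2 ⋯ u_m` inside the `N`-fold tensor power. -/
def UM (n N m : ℕ) [NeZero n] : Matrix (Fin N → Fin n) (Fin N → Fin n) ℂ :=
  (((List.range m).map fun s => uM n N (s + 1))).prod

/-- `F_r = f_r ⊗ 1 ⊗ ⋯ ⊗ 1` inside the `N`-fold tensor power. -/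
def FM (n N : ℕ) [NeZero n] (r : Fin n) : Matrix (Fin N → Fin n) (Fin N → Fin n) ℂ :=
  tens n N fun k => if (k : ℕ) = 0 then fM n r else 1

/-- `E(i) = e_{i_1} ⊗ ⋯ ⊗ e_{i_m} ⊗ 1 ⊗ ⋯ ⊗ 1` inside the `N`-fold tensor power,
with the `e`'s occupying factors `0, …, m-1`. -/
def EM (n N m : ℕ) (i : Fin m → Fin n) : Matrix (Fin N → Fin n) (Fin N → Fin n) ℂ :=
  tens n N fun k => if h : (k : ℕ) < m then eM n (i ⟨(k : ℕ), h⟩) else 1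

/-- `v = Σ_i w^i ⊗ₖ f_i ∈ M_n(ℂ) ⊗ M_n(ℂ)`, via the Kronecker product. -/
def vM (n : ℕ) [NeZero n] : Matrix (Fin n × Fin n) (Fin n × Fin n) ℂ :=
  ∑ i : Fin n, (wM n ^ (i : ℕ)) ⊗ₖ fM n i

namespace Aux11

open scoped Fin.NatCast Fin.CommRing

variable {n : ℕ} [NeZero n]

lemma omega_prim (n : ℕ) [NeZero n] : IsPrimitiveRoot (omega n) n :=
  Complex.isPrimitiveRoot_exp n (NeZero.ne n)

lemma omega_pow_n (n : ℕ) [NeZero n] : omega n ^ n = 1 := (omega_prim n).pow_eq_one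

lemma omega_ne_zero (n : ℕ) [NeZero n] : omega n ≠ 0 := Complex.exp_ne_zero _

lemma omega_pow_mod (n : ℕ) [NeZero n] (m : ℕ) : omega n ^ (m % n) = omega n ^ m := by
  conv_rhs => rw [← Nat.div_add_mod m n]
  rw [pow_add, pow_mul, omega_pow_n, one_pow, one_mul]

/-- The character `x ↦ ω^x` on `Fin n`. -/
def ch (n : ℕ) [NeZero n] (x : Fin n) : ℂ := omega n ^ (x : ℕ)

lemma ch_zero : ch n 0 = 1 := by simp [ch]

lemma ch_add (x y : Fin n) : ch n (x + y) = ch n x * ch n y := by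
  unfold ch
  rw [Fin.val_add, omega_pow_mod, pow_add]

lemma ch_mul (x y : Fin n) : ch n (x * y) = omega n ^ ((x : ℕ) * (y : ℕ)) := by
  unfold ch
  rw [Fin.val_mul, omega_pow_mod]

lemma ch_ne_zero (x : Fin n) : ch n x ≠ 0 := pow_ne_zero _ (omega_ne_zero n)

lemma ch_neg (x : Fin n) : ch n (-x) = (ch n x)⁻¹ := by
  have h : ch n (-x) * ch n x = 1 := by rw [← ch_add, neg_add_cancel, ch_zero]
  field_simp [ch_ne_zero x] at h ⊢
  linear_combination h

lemma star_omega (n : ℕ) [NeZero n] : (starRingEnd ℂ) (omega n) = (omega n)⁻¹ := by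
  unfold omega
  rw [← Complex.exp_conj, ← Complex.exp_neg]
  congr 1
  rw [map_div₀, _root_.map_mul, _root_.map_mul, Complex.conj_I, Complex.conj_ofReal,
    map_ofNat, map_natCast]
  ring

lemma star_ch (x : Fin n) : (starRingEnd ℂ) (ch n x) = (ch n x)⁻¹ := by
  unfold ch
  rw [map_pow, star_omega, inv_pow]

lemma sum_ch (m : Fin n) : ∑ d : Fin n, ch n (d * m) = if m = 0 then (n : ℂ) else 0 := by
  by_cases hm : m = 0
  · simp [hm, ch]
  · rw [if_neg hm]
    have hm' : (m : ℕ) ≠ 0 := fun h => hm (Fin.ext (by simp [h]))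
    have h1 : (omega n ^ (m : ℕ)) ≠ 1 :=
      (omega_prim n).pow_ne_one_of_pos_of_lt hm' m.isLt
    have h2 : ∀ d : Fin n, ch n (d * m) = (omega n ^ (m : ℕ)) ^ (d : ℕ) := by
      intro d
      rw [ch_mul, ← pow_mul, Nat.mul_comm]
    simp only [h2]
    rw [Fin.sum_univ_eq_sum_range (fun d => (omega n ^ (m : ℕ)) ^ d) n]
    rw [geom_sum_eq h1, ← pow_mul, Nat.mul_comm, pow_mul, omega_pow_n, one_pow, sub_self,
      zero_div]

lemma wM_pow_apply (j : ℕ) (a b : Fin n) :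
    (wM n ^ j) a b = if b = a + (j : Fin n) then 1 else 0 := by
  induction j generalizing b with
  | zero => simp [Matrix.one_apply, eq_comm]
  | succ j ih =>
    rw [pow_succ, Matrix.mul_apply]
    have h : ∀ c : Fin n, (wM n ^ j) a c * wM n c b
        = if c = a + (j : Fin n) then (if b = a + (j : Fin n) + 1 then 1 else 0) else 0 := by
      intro c
      rw [ih]
      by_cases h : c = a + (j : Fin n)
      · subst h; simp [wM]
      · simp [h]
    simp only [h]
    rw [Finset.sum_ite_eq' Finset.univ (a + (j : Fin n))]
    simp only [Finset.mem_univ, if_true]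
    congr 1
    rw [Nat.cast_add, Nat.cast_one, add_assoc]

lemma fM_apply (k a b : Fin n) :
    fM n k a b = (n : ℂ)⁻¹ * ch n (-((b - a) * k)) := by
  unfold fM
  rw [Matrix.smul_apply, Matrix.sum_apply]
  have h : ∀ j : Fin n, ((omega n ^ ((j : ℕ) * (k : ℕ)))⁻¹ • wM n ^ (j : ℕ)) a b
      = if j = b - a then (ch n ((b - a) * k))⁻¹ else 0 := by
    intro j
    rw [Matrix.smul_apply, wM_pow_apply, Fin.cast_val_eq_self]
    have hcond : (b = a + j) ↔ (j = b - a) := by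
      constructor
      · rintro rfl; rw [add_sub_cancel_left]
      · rintro rfl; rw [add_sub_cancel]
    by_cases h : j = b - a
    · rw [if_pos (hcond.mpr h), if_pos h, smul_eq_mul, mul_one, ← ch_mul, h]
    · rw [if_neg (fun hb => h (hcond.mp hb)), if_neg h, smul_eq_mul, mul_zero]
  simp only [h]
  rw [Finset.sum_ite_eq' Finset.univ (b - a)]
  simp only [Finset.mem_univ, if_true, smul_eq_mul]
  rw [ch_neg]

lemma fM_mul_fM (i j : Fin n) : fM n i * fM n j = if i = j then fM n i else 0 := by
  have hn0 : (n : ℂ) ≠ 0 := Nat.cast_ne_zero.mpr (NeZero.ne n)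
  have main : ∀ a b : Fin n, (fM n i * fM n j) a b
      = (n : ℂ)⁻¹ * (n : ℂ)⁻¹ * ch n (-((b - a) * j))
        * (if j - i = 0 then (n : ℂ) else 0) := by
    intro a b
    rw [Matrix.mul_apply]
    have key : ∀ c : Fin n,
        fM n i a c * fM n j c b
          = (n : ℂ)⁻¹ * (n : ℂ)⁻¹ * ch n (-((b - a) * j)) * ch n ((c - a) * (j - i)) := by
      intro c
      rw [fM_apply, fM_apply, mul_mul_mul_comm, ← ch_add]
      have he : -((c - a) * i) + -((b - c) * j) = -((b - a) * j) + (c - a) * (j - i) := by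
        ring
      rw [he, ch_add]
      ring
    simp only [key]
    rw [← Finset.mul_sum]
    have hre : ∑ c : Fin n, ch n ((c - a) * (j - i)) = ∑ d : Fin n, ch n (d * (j - i)) :=
      Fintype.sum_equiv (Equiv.subRight a) _ _ (fun c => rfl)
    rw [hre, sum_ch]
  ext a b
  rw [main]
  by_cases h : i = j
  · subst h
    rw [if_pos rfl, sub_self, if_pos rfl, fM_apply]
    field_simp
  · rw [if_neg h, if_neg (sub_ne_zero.mpr (Ne.symm h)), Matrix.zero_apply, mul_zero]

lemma fM_conjTranspose (k : Fin n) : (fM n k)ᴴ = fM n k := by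
  ext a b
  rw [Matrix.conjTranspose_apply, fM_apply, fM_apply,
    show (a - b) * k = -((b - a) * k) by ring, neg_neg]
  rw [star_mul', ch_neg]
  have : star (ch n ((b - a) * k)) = (ch n ((b - a) * k))⁻¹ := star_ch _
  rw [this]
  congr 1
  simp

lemma kron_conjTranspose (A B : Matrix (Fin n) (Fin n) ℂ) : (A ⊗ₖ B)ᴴ = Aᴴ ⊗ₖ Bᴴ := by
  ext ⟨i, j⟩ ⟨i', j'⟩
  simp [Matrix.conjTranspose_apply, mul_comm]

lemma w_e (j k : Fin n) :
    wM n ^ (k : ℕ) * eM n j * (wM n ^ (k : ℕ))ᴴ = eM n (j - k) := by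
  have hA : ∀ a d : Fin n, (wM n ^ (k : ℕ) * eM n j) a d = eM n j (a + k) d := by
    intro a d
    rw [Matrix.mul_apply]
    have h : ∀ c : Fin n, (wM n ^ (k : ℕ)) a c * eM n j c d
        = if c = a + k then eM n j (a + k) d else 0 := by
      intro c
      rw [wM_pow_apply, Fin.cast_val_eq_self]
      by_cases h : c = a + k
      · subst h; simp
      · simp [h]
    simp only [h]
    rw [Finset.sum_ite_eq' Finset.univ (a + k)]
    simp
  ext a b
  rw [Matrix.mul_apply]
  have h : ∀ d : Fin n, (wM n ^ (k : ℕ) * eM n j) a d * (wM n ^ (k : ℕ))ᴴ d b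
      = if d = b + k then eM n j (a + k) (b + k) else 0 := by
    intro d
    rw [hA, Matrix.conjTranspose_apply, wM_pow_apply, Fin.cast_val_eq_self]
    by_cases h : d = b + k
    · subst h; simp
    · simp [h]
  simp only [h]
  rw [Finset.sum_ite_eq' Finset.univ (b + k)]
  simp only [Finset.mem_univ, if_true]
  have h1 : (j = a + k) ↔ (j - k = a) := by
    constructor
    · rintro rfl; rw [add_sub_cancel_right]
    · rintro rfl; rw [sub_add_cancel]
  have h2 : (j = b + k) ↔ (j - k = b) := by
    constructor
    · rintro rfl; rw [add_sub_cancel_right]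
    · rintro rfl; rw [sub_add_cancel]
  simp only [eM, Matrix.single, Matrix.of_apply, h1, h2]

end Aux11

/-- for every `x ∈ M_n(ℂ)`,
`v (x ⊗ₖ 1) vᴴ = Σ_k (w^k x (w^k)ᴴ) ⊗ₖ f_k`; in particular
`v (e_j ⊗ₖ 1) vᴴ = Σ_k e_{j-k} ⊗ₖ f_k` for every `j`. -/
theorem statement11 (n : ℕ) [NeZero n] (hn : 2 ≤ n) :
    (∀ x : Matrix (Fin n) (Fin n) ℂ,
        vM n * (x ⊗ₖ (1 : Matrix (Fin n) (Fin n) ℂ)) * (vM n)ᴴ =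
          ∑ k : Fin n, (wM n ^ (k : ℕ) * x * (wM n ^ (k : ℕ))ᴴ) ⊗ₖ fM n k) ∧
      ∀ j : Fin n,
        vM n * (eM n j ⊗ₖ (1 : Matrix (Fin n) (Fin n) ℂ)) * (vM n)ᴴ =
          ∑ k : Fin n, eM n (j - k) ⊗ₖ fM n k := by
  have main : ∀ x : Matrix (Fin n) (Fin n) ℂ,
      vM n * (x ⊗ₖ (1 : Matrix (Fin n) (Fin n) ℂ)) * (vM n)ᴴ =
        ∑ k : Fin n, (wM n ^ (k : ℕ) * x * (wM n ^ (k : ℕ))ᴴ) ⊗ₖ fM n k := by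
    intro x
    unfold vM
    rw [Matrix.conjTranspose_sum, Finset.sum_mul, Finset.sum_mul]
    simp only [Finset.mul_sum]
    have term : ∀ i j : Fin n,
        ((wM n ^ (i : ℕ)) ⊗ₖ fM n i * (x ⊗ₖ (1 : Matrix (Fin n) (Fin n) ℂ)))
            * ((wM n ^ (j : ℕ)) ⊗ₖ fM n j)ᴴ
          = if i = j then (wM n ^ (i : ℕ) * x * (wM n ^ (i : ℕ))ᴴ) ⊗ₖ fM n i else 0 := by
      intro i j
      rw [Aux11.kron_conjTranspose, Aux11.fM_conjTranspose, ← Matrix.mul_kronecker_mul,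
        ← Matrix.mul_kronecker_mul, Matrix.mul_one, Aux11.fM_mul_fM]
      by_cases h : i = j
      · subst h; rw [if_pos rfl, if_pos rfl]
      · rw [if_neg h, if_neg h, Matrix.kronecker_zero]
    simp only [term]
    simp only [Finset.sum_ite_eq, Finset.mem_univ, if_true]
  refine ⟨main, fun j => ?_⟩
  rw [main (eM n j)]
  exact Finset.sum_congr rfl fun k _ => by rw [Aux11.w_e]
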